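/- Let G be a group and let f be a cover-submultiplicative function on the finite-index subgroups of G. Suppose there is a real number α > 0 such that α · [G:K] ≤ f(K) for every finite-index subgroup K of G. Let H and H′ be finite-index subgroups of G and suppose there is a group isomorphism φ : H → H′ such that for every finite-index subgroup K of G with K ≤ H, the image φ(K) (viewed as a subgroup of G via H′ ≤ G) satisfies f(φ(K)) = f(K). Then [G:H] = [G:H′]. -/

import Mathlib

/-- A function `f` assigning to each finite-index subgroup of `G` a nonnegative real number
is *cover-submultiplicative* if `f K ≤ [K':K] * f K'` whenever `K ≤ K'` are finite-index
subgroups of `G`. -/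
def CoverSubmultiplicative {G : Type*} [Group G] (f : Subgroup G → ℝ) : Prop :=
  (∀ K : Subgroup G, K.index ≠ 0 → 0 ≤ f K) ∧
    ∀ K K' : Subgroup G, K.index ≠ 0 → K'.index ≠ 0 → K ≤ K' →
      f K ≤ (K.relIndex K' : ℝ) * f K'

/-- If `f` is cover-submultiplicative, linearly bounded below by `α * [G:K]` with `α > 0`,
and `H ≅ H'` are finite-index subgroups via an isomorphism `φ` preserving `f` on
finite-index subgroups `K ≤ H`, then `[G:H] = [G:H']`. -/
theorem stmt_2 {G : Type*} [Group G] (f : Subgroup G → ℝ)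
    (hf : CoverSubmultiplicative f)
    (α : ℝ) (hα : 0 < α)
    (hlow : ∀ K : Subgroup G, K.index ≠ 0 → α * (K.index : ℝ) ≤ f K)
    (H H' : Subgroup G) (hH : H.index ≠ 0) (hH' : H'.index ≠ 0)
    (φ : H ≃* H')
    (hφ : ∀ K : Subgroup G, K.index ≠ 0 → K ≤ H →
      f (Subgroup.map H'.subtype (Subgroup.map φ.toMonoidHom (K.subgroupOf H))) = f K) :
    H.index = H'.index := by
  classical
  obtain ⟨hf0, hfs⟩ := hf
  -- the set of normalized values over finite-index subgroups of `J`
  set S : Subgroup G → Set ℝ :=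
    fun J => {x | ∃ K : Subgroup G, K.index ≠ 0 ∧ K ≤ J ∧
      x = f K * (J.index : ℝ) / (K.index : ℝ)} with hSdef
  have hmem : ∀ J K : Subgroup G, K.index ≠ 0 → K ≤ J →
      f K * (J.index : ℝ) / (K.index : ℝ) ∈ S J := fun J K h1 h2 => ⟨K, h1, h2, rfl⟩
  have htop : (⊤ : Subgroup G).index ≠ 0 := by simp [Subgroup.index_top]
  -- lower bound for elements of S J
  have hlb : ∀ J : Subgroup G, ∀ x ∈ S J, α * (J.index : ℝ) ≤ x := by
    rintro J x ⟨K, hK, hKJ, rfl⟩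
    have hKpos : (0 : ℝ) < (K.index : ℝ) := by
      exact_mod_cast Nat.pos_of_ne_zero hK
    rw [show α * (J.index : ℝ) = α * (K.index : ℝ) * (J.index : ℝ) / (K.index : ℝ) from by
      field_simp]
    gcongr
    exact hlow K hK
  have hbdd : ∀ J : Subgroup G, BddBelow (S J) := fun J => ⟨α * J.index, fun x hx => hlb J x hx⟩
  have hne : ∀ J : Subgroup G, J.index ≠ 0 → (S J).Nonempty :=
    fun J hJ => ⟨_, hmem J J hJ le_rfl⟩
  -- monotone comparison
  have hdivle : ∀ K M : Subgroup G, K.index ≠ 0 → M.index ≠ 0 → M ≤ K →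
      f M / (M.index : ℝ) ≤ f K / (K.index : ℝ) := by
    intro K M hK hM hMK
    have hKpos : (0 : ℝ) < (K.index : ℝ) := by exact_mod_cast Nat.pos_of_ne_zero hK
    have hMpos : (0 : ℝ) < (M.index : ℝ) := by exact_mod_cast Nat.pos_of_ne_zero hM
    have h1 : (M.relIndex K) * K.index = M.index := Subgroup.relIndex_mul_index hMK
    rw [div_le_div_iff₀ hMpos hKpos]
    calc f M * (K.index : ℝ)
        ≤ (M.relIndex K : ℝ) * f K * (K.index : ℝ) :=
          mul_le_mul_of_nonneg_right (hfs M K hM hK hMK) hKpos.le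
      _ = f K * ((M.relIndex K * K.index : ℕ) : ℝ) := by push_cast; ring
      _ = f K * (M.index : ℝ) := by rw [h1]
  -- scaling lemma: sInf (S J) = J.index * sInf (S ⊤)
  have hscale : ∀ J : Subgroup G, J.index ≠ 0 →
      sInf (S J) = (J.index : ℝ) * sInf (S ⊤) := by
    intro J hJ
    have hJpos : (0 : ℝ) < (J.index : ℝ) := by exact_mod_cast Nat.pos_of_ne_zero hJ
    apply le_antisymm
    · have key : sInf (S J) / (J.index : ℝ) ≤ sInf (S ⊤) := by
        apply le_csInf (hne ⊤ htop)
        rintro y ⟨K, hK, -, rfl⟩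
        rw [Subgroup.index_top, Nat.cast_one, mul_one]
        have hM : (K ⊓ J).index ≠ 0 := Subgroup.index_inf_ne_zero hK hJ
        have h2 : sInf (S J) ≤ f (K ⊓ J) * (J.index : ℝ) / ((K ⊓ J).index : ℝ) :=
          csInf_le (hbdd J) (hmem J _ hM inf_le_right)
        have h3 : f (K ⊓ J) / ((K ⊓ J).index : ℝ) ≤ f K / (K.index : ℝ) :=
          hdivle K _ hK hM inf_le_left
        have h4 : f (K ⊓ J) * (J.index : ℝ) / ((K ⊓ J).index : ℝ)
            ≤ f K / (K.index : ℝ) * (J.index : ℝ) := by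
          calc f (K ⊓ J) * (J.index : ℝ) / ((K ⊓ J).index : ℝ)
              = f (K ⊓ J) / ((K ⊓ J).index : ℝ) * (J.index : ℝ) := by ring
            _ ≤ f K / (K.index : ℝ) * (J.index : ℝ) :=
              mul_le_mul_of_nonneg_right h3 hJpos.le
        rw [div_le_iff₀ hJpos]
        linarith
      have := (div_le_iff₀ hJpos).mp key
      linarith
    · apply le_csInf (hne J hJ)
      rintro x ⟨K, hK, hKJ, rfl⟩
      have h1 : sInf (S ⊤) ≤ f K * ((⊤ : Subgroup G).index : ℝ) / (K.index : ℝ) :=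
        csInf_le (hbdd ⊤) (hmem ⊤ K hK le_top)
      rw [Subgroup.index_top, Nat.cast_one, mul_one] at h1
      calc (J.index : ℝ) * sInf (S ⊤) ≤ (J.index : ℝ) * (f K / (K.index : ℝ)) :=
            mul_le_mul_of_nonneg_left h1 hJpos.le
        _ = f K * (J.index : ℝ) / (K.index : ℝ) := by ring
  -- index bookkeeping
  have hidx : ∀ (A K : Subgroup G), K ≤ A → (K.subgroupOf A).index * A.index = K.index := by
    intro A K hKA
    rw [← Subgroup.index_map_subtype, Subgroup.subgroupOf_map_subtype, inf_eq_left.mpr hKA]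
  have hmapidx : ∀ (A B : Subgroup G) (ψ : A ≃* B) (L : Subgroup A),
      (Subgroup.map ψ.toMonoidHom L).index = L.index := by
    intro A B ψ L
    apply Subgroup.index_map_eq
    · exact ψ.surjective
    · rw [(MonoidHom.ker_eq_bot_iff _).mpr ψ.injective]
      exact bot_le
  -- roundtrip lemma for the inverse isomorphism
  have hrev : ∀ K' : Subgroup G, K'.index ≠ 0 → K' ≤ H' →
      f (Subgroup.map H.subtype (Subgroup.map φ.symm.toMonoidHom (K'.subgroupOf H'))) = f K' := by
    intro K' hK' hle
    set L' : Subgroup H' := K'.subgroupOf H' with hL'def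
    set K : Subgroup G := Subgroup.map H.subtype (Subgroup.map φ.symm.toMonoidHom L') with hKdef
    have hKH : K ≤ H := Subgroup.map_subtype_le _
    have hL'ne : L'.index ≠ 0 := by
      intro h0
      apply hK'
      rw [← hidx H' K' hle, ← hL'def, h0, zero_mul]
    have hKidx : K.index ≠ 0 := by
      rw [hKdef, Subgroup.index_map_subtype, hmapidx]
      exact mul_ne_zero hL'ne hH
    have h1 : K.subgroupOf H = Subgroup.map φ.symm.toMonoidHom L' := by
      rw [hKdef, Subgroup.subgroupOf,
        Subgroup.comap_map_eq_self_of_injective H.subtype_injective]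
    have h2 : Subgroup.map φ.toMonoidHom (Subgroup.map φ.symm.toMonoidHom L') = L' := by
      rw [Subgroup.map_map]
      have hcomp : φ.toMonoidHom.comp φ.symm.toMonoidHom = MonoidHom.id H' := by
        ext x; simp
      rw [hcomp, Subgroup.map_id]
    have h3 : Subgroup.map H'.subtype L' = K' := by
      rw [hL'def, Subgroup.subgroupOf_map_subtype, inf_eq_left.mpr hle]
    have := hφ K hKidx hKH
    rw [h1, h2, h3] at this
    exact this.symm
  -- transporting the set S along an isomorphism preserving f
  have hsub : ∀ (A B : Subgroup G) (ψ : A ≃* B), A.index ≠ 0 → B.index ≠ 0 →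
      (∀ K : Subgroup G, K.index ≠ 0 → K ≤ A →
        f (Subgroup.map B.subtype (Subgroup.map ψ.toMonoidHom (K.subgroupOf A))) = f K) →
      S A ⊆ S B := by
    intro A B ψ hA hB hpres x hx
    obtain ⟨K, hK, hKA, rfl⟩ := hx
    set L : Subgroup A := K.subgroupOf A with hLdef
    set K' : Subgroup G := Subgroup.map B.subtype (Subgroup.map ψ.toMonoidHom L) with hK'def
    have hLA : L.index * A.index = K.index := hidx A K hKA
    have hLne : L.index ≠ 0 := by
      intro h0; apply hK; rw [← hLA, h0, zero_mul]
    have hK'idx : K'.index = L.index * B.index := by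
      rw [hK'def, Subgroup.index_map_subtype, hmapidx]
    refine ⟨K', ?_, Subgroup.map_subtype_le _, ?_⟩
    · rw [hK'idx]; exact mul_ne_zero hLne hB
    · rw [hpres K hK hKA]
      have hLpos : ((L.index : ℕ) : ℝ) ≠ 0 := Nat.cast_ne_zero.mpr hLne
      have hApos : ((A.index : ℕ) : ℝ) ≠ 0 := Nat.cast_ne_zero.mpr hA
      have hBpos : ((B.index : ℕ) : ℝ) ≠ 0 := Nat.cast_ne_zero.mpr hB
      rw [← hLA, hK'idx]
      push_cast
      field_simp
  have hSeq : S H = S H' :=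
    le_antisymm (hsub H H' φ hH hH' hφ) (hsub H' H φ.symm hH' hH hrev)
  -- conclude
  have hc0 : 0 < sInf (S ⊤) := by
    have h1 : α * ((⊤ : Subgroup G).index : ℝ) ≤ sInf (S ⊤) :=
      le_csInf (hne ⊤ htop) (hlb ⊤)
    rw [Subgroup.index_top, Nat.cast_one, mul_one] at h1
    linarith
  have e : (H.index : ℝ) * sInf (S ⊤) = (H'.index : ℝ) * sInf (S ⊤) := by
    rw [← hscale H hH, ← hscale H' hH', hSeq]
  have : (H.index : ℝ) = (H'.index : ℝ) := mul_right_cancel₀ hc0.ne' e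
  exact_mod_cast this
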